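/- arXiv:2007.15556 — 4 statements merged into one kernel-verified Lean document; each statement's English description precedes it below -/
import Mathlib

section
/- The Moser Spindle M has 7 vertices and 11 edges, admits a (7,2)-colouring (a homomorphism to G_{7,2}), and for all positive integers p, q with 2q ≤ p and 2p < 7q, M admits no (p,q)-colouring. (In particular, M has no proper 3-colouring, and the circular chromatic number of M equals 7/2.) -/
open SimpleGraph

/-- The circular clique `G_{p,q}` on vertex set `ZMod p`. -/
def circClique (p q : ℕ) : SimpleGraph (ZMod p) where
  Adj i j := i ≠ j ∧ (q ≤ (i - j).val ∧ (i - j).val ≤ p - q)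
    ∧ (q ≤ (j - i).val ∧ (j - i).val ≤ p - q)
  symm := ⟨fun _ _ ⟨h, h1, h2⟩ => ⟨h.symm, h2, h1⟩⟩
  loopless := ⟨fun _ h => h.1 rfl⟩

/-- `G` admits a `(p,q)`-circular colouring. -/
def HasCircColoring {V : Type*} (G : SimpleGraph V) (p q : ℕ) : Prop :=
  Nonempty (G →g circClique p q)

/-- A graph is 4-critical. -/
def FourCritical {V : Type*} (G : SimpleGraph V) : Prop :=
  ¬ G.Colorable 3 ∧ ∀ e ∈ G.edgeSet, (G.deleteEdges {e}).Colorable 3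

/-- The wheel on `n` vertices: a cycle on `n-1` vertices plus a hub. -/
def wheel (n : ℕ) : SimpleGraph (Option (Fin (n - 1))) where
  Adj u v := match u, v with
    | none, none => False
    | none, some _ => True
    | some _, none => True
    | some i, some j => (cycleGraph (n - 1)).Adj i j
  symm := ⟨by rintro (_|i) (_|j) h <;> simp_all <;> exact h.symm⟩
  loopless := ⟨by rintro (_|i) h <;> simp_all⟩

/-- The Moser spindle, with `a,…,g` encoded as `0,…,6`. -/
def moserSpindle : SimpleGraph (Fin 7) :=
  SimpleGraph.fromEdgeSet
    {s(0, 1), s(0, 2), s(0, 5), s(0, 6), s(1, 2), s(1, 3),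
     s(2, 3), s(3, 4), s(4, 5), s(4, 6), s(5, 6)}

private lemma tri' {p : ℕ} [NeZero p] (x y z : ZMod p) :
    (x - z).val = (x - y).val + (y - z).val ∨
    (x - z).val + p = (x - y).val + (y - z).val := by
  have h1 := ZMod.val_lt (x - z)
  have h2 := ZMod.val_lt (x - y)
  have h3 := ZMod.val_lt (y - z)
  have e : (x - z).val = ((x - y).val + (y - z).val) % p := by
    conv_lhs => rw [show x - z = (x - y) + (y - z) by ring]
    rw [show ((x - y) + (y - z) : ZMod p) = (((x - y).val + (y - z).val : ℕ) : ZMod p) by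
      push_cast [ZMod.natCast_val, ZMod.cast_id]; ring]
    rw [ZMod.val_natCast]
  rcases Nat.lt_or_ge ((x - y).val + (y - z).val) p with h | h
  · rw [Nat.mod_eq_of_lt h] at e; omega
  · rw [Nat.mod_eq_sub_mod h, Nat.mod_eq_of_lt (by omega)] at e; omega

private lemma diamondArith (p q d01 d12 d02 d13 d23 D03 : ℕ)
    (hq : 0 < q) (h2q : 2*q ≤ p) (h7 : 2*p < 7*q)
    (b1 : q ≤ d01 ∧ d01 ≤ p - q) (b2 : q ≤ d12 ∧ d12 ≤ p - q)
    (b3 : q ≤ d02 ∧ d02 ≤ p - q) (b4 : q ≤ d13 ∧ d13 ≤ p - q)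
    (b5 : q ≤ d23 ∧ d23 ≤ p - q) (lt : D03 < p)
    (H1 : d02 = d01 + d12 ∨ d02 + p = d01 + d12)
    (H2 : d13 = d12 + d23 ∨ d13 + p = d12 + d23)
    (H5 : D03 = d01 + d13 ∨ D03 + p = d01 + d13)
    (H6 : D03 = d02 + d23 ∨ D03 + p = d02 + d23) :
    D03 ≤ p - 3*q ∨ 3*q ≤ D03 := by
  rcases H1 with H1|H1 <;> rcases H2 with H2|H2 <;> rcases H5 with H5|H5 <;>
    rcases H6 with H6|H6 <;> omega

private lemma finalArith (p q D03 D04 e43 : ℕ)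
    (hq : 0 < q) (h2q : 2*q ≤ p) (h7 : 2*p < 7*q)
    (lt1 : D03 < p) (lt2 : D04 < p)
    (b : q ≤ e43 ∧ e43 ≤ p - q)
    (c3 : D03 ≤ p - 3*q ∨ 3*q ≤ D03)
    (c4 : D04 ≤ p - 3*q ∨ 3*q ≤ D04)
    (H9 : D03 = D04 + e43 ∨ D03 + p = D04 + e43) : False := by
  rcases c3 with c3|c3 <;> rcases c4 with c4|c4 <;> rcases H9 with H9|H9 <;> omega

/-- The Moser spindle has 7 vertices, 11 edges, a (7,2)-colouring, and no
`(p,q)`-colouring whenever `2q ≤ p` and `2p < 7q`; hence its circular chromatic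
number is `7/2`. -/
theorem stmt_4 :
    Fintype.card (Fin 7) = 7 ∧
    moserSpindle.edgeSet.ncard = 11 ∧
    HasCircColoring moserSpindle 7 2 ∧
    ∀ p q : ℕ, 0 < q → 2 * q ≤ p → 2 * p < 7 * q → ¬ HasCircColoring moserSpindle p q := by
  refine ⟨rfl, ?_, ?_, ?_⟩
  · -- 11 edges
    rw [moserSpindle, edgeSet_fromEdgeSet]
    have h : ({s(0, 1), s(0, 2), s(0, 5), s(0, 6), s(1, 2), s(1, 3),
       s(2, 3), s(3, 4), s(4, 5), s(4, 6), s(5, 6)} : Set (Sym2 (Fin 7))) \ {e | e.IsDiag} =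
       ↑({s(0, 1), s(0, 2), s(0, 5), s(0, 6), s(1, 2), s(1, 3),
       s(2, 3), s(3, 4), s(4, 5), s(4, 6), s(5, 6)} : Finset (Sym2 (Fin 7))) := by
      ext e
      induction e using Sym2.ind with
      | _ x y =>
        simp only [Set.mem_diff, Set.mem_insert_iff, Set.mem_singleton_iff, Set.mem_setOf_eq,
          Finset.coe_insert, Finset.mem_coe, Finset.mem_insert, Finset.mem_singleton]
        revert x y
        decide
    rw [Sym2.diagSet_eq_setOfPred_isDiag, h, Set.ncard_coe_finset]
    decide
  · -- (7,2)-colouring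
    refine ⟨⟨fun i => (2 * i.val : ZMod 7), ?_⟩⟩
    intro a b hab
    rw [moserSpindle, fromEdgeSet_adj] at hab
    obtain ⟨hm, -⟩ := hab
    simp only [Set.mem_insert_iff, Set.mem_singleton_iff, Sym2.eq, Sym2.rel_iff', Prod.mk.injEq,
      Prod.swap_prod_mk] at hm
    rcases hm with (⟨h1,h2⟩|⟨h1,h2⟩)|(⟨h1,h2⟩|⟨h1,h2⟩)|(⟨h1,h2⟩|⟨h1,h2⟩)|(⟨h1,h2⟩|⟨h1,h2⟩)|
      (⟨h1,h2⟩|⟨h1,h2⟩)|(⟨h1,h2⟩|⟨h1,h2⟩)|(⟨h1,h2⟩|⟨h1,h2⟩)|(⟨h1,h2⟩|⟨h1,h2⟩)|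
      (⟨h1,h2⟩|⟨h1,h2⟩)|(⟨h1,h2⟩|⟨h1,h2⟩)|(⟨h1,h2⟩|⟨h1,h2⟩) <;> subst h1 <;> subst h2 <;>
      exact show _ ∧ _ from ⟨by decide, ⟨by decide, by decide⟩, by decide, by decide⟩
  · -- no (p,q)-colouring when 2p < 7q
    rintro p q hq h2q h7 ⟨f⟩
    haveI : NeZero p := ⟨by omega⟩
    have madj : ∀ i j : Fin 7, s(i, j) ∈ ({s(0, 1), s(0, 2), s(0, 5), s(0, 6), s(1, 2), s(1, 3),
        s(2, 3), s(3, 4), s(4, 5), s(4, 6), s(5, 6)} : Set (Sym2 (Fin 7))) → i ≠ j →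
        (circClique p q).Adj (f i) (f j) := by
      intro i j hm hne
      exact f.map_rel (by rw [moserSpindle, fromEdgeSet_adj]; exact ⟨hm, hne⟩)
    dsimp only [circClique] at madj
    obtain ⟨-, h01, h10⟩ := madj 0 1 (by simp) (by decide)
    obtain ⟨-, h02, h20⟩ := madj 0 2 (by simp) (by decide)
    obtain ⟨-, h05, h50⟩ := madj 0 5 (by simp) (by decide)
    obtain ⟨-, h06, h60⟩ := madj 0 6 (by simp) (by decide)
    obtain ⟨-, h12, h21⟩ := madj 1 2 (by simp) (by decide)
    obtain ⟨-, h13, h31⟩ := madj 1 3 (by simp) (by decide)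
    obtain ⟨-, h23, h32⟩ := madj 2 3 (by simp) (by decide)
    obtain ⟨-, h34, h43⟩ := madj 3 4 (by simp) (by decide)
    obtain ⟨-, h45, h54⟩ := madj 4 5 (by simp) (by decide)
    obtain ⟨-, h46, h64⟩ := madj 4 6 (by simp) (by decide)
    obtain ⟨-, h56, h65⟩ := madj 5 6 (by simp) (by decide)
    have c3 := diamondArith p q _ _ _ _ _ ((f 0 - f 3).val) hq h2q h7
      h01 h12 h02 h13 h23 (ZMod.val_lt _)
      (tri' (f 0) (f 1) (f 2)) (tri' (f 1) (f 2) (f 3))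
      (tri' (f 0) (f 1) (f 3)) (tri' (f 0) (f 2) (f 3))
    have c4 := diamondArith p q _ _ _ _ _ ((f 0 - f 4).val) hq h2q h7
      h05 h56 h06 h54 h64 (ZMod.val_lt _)
      (tri' (f 0) (f 5) (f 6)) (tri' (f 5) (f 6) (f 4))
      (tri' (f 0) (f 5) (f 4)) (tri' (f 0) (f 6) (f 4))
    exact finalArith p q ((f 0 - f 3).val) ((f 0 - f 4).val) ((f 4 - f 3).val)
      hq h2q h7 (ZMod.val_lt _) (ZMod.val_lt _) h43 c3 c4 (tri' (f 0) (f 4) (f 3))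
end

section
/- Let G be a finite simple 4-critical graph with no (7,2)-colouring. Let x, y, z be distinct vertices of G, each of degree 3, with xy ∈ E(G), yz ∈ E(G) and xz ∉ E(G), and let y' be the neighbour of y other than x and z. Then the two neighbours of x other than y can be labelled x', x'' and the two neighbours of z other than y can be labelled z', z'' so that: x' = z', y'x'' ∈ E(G), y'z'' ∈ E(G), and x'' ≠ z''. Moreover, if x' ≠ y', then there exist two distinct vertices u and w, neither belonging to {x, y, z}, such that u is adjacent to both x' and x'', and w is adjacent to both x' and z''. -/
open SimpleGraph

private lemma gp {a b : ZMod 7}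
    (h : a ≠ b ∧ (2 ≤ (a - b).val ∧ (a - b).val ≤ 5) ∧ (2 ≤ (b - a).val ∧ (b - a).val ≤ 5)) :
    (circClique 7 2).Adj a b := h
private lemma nbhd_eq {V : Type*} [Fintype V] (G : SimpleGraph V) [DecidableRel G.Adj]
    {v a b c : V} (hd : G.degree v = 3) (hab : a ≠ b) (hac : a ≠ c) (hbc : b ≠ c)
    (ha : G.Adj v a) (hb : G.Adj v b) (hc : G.Adj v c) :
    ∀ w, G.Adj v w ↔ (w = a ∨ w = b ∨ w = c) := by
  classical
  have hsub : ({a, b, c} : Finset V) ⊆ G.neighborFinset v := by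
    intro w hw
    rw [Finset.mem_insert, Finset.mem_insert, Finset.mem_singleton] at hw
    rw [SimpleGraph.mem_neighborFinset]
    rcases hw with h | h | h <;> subst h <;> assumption
  have hcard : ({a, b, c} : Finset V).card = 3 := by
    rw [Finset.card_insert_of_notMem (by simp [hab, hac]),
      Finset.card_insert_of_notMem (by simp [hbc]), Finset.card_singleton]
  have hle : (G.neighborFinset v).card ≤ ({a, b, c} : Finset V).card := by
    rw [hcard]
    exact le_of_eq hd
  have heq : ({a, b, c} : Finset V) = G.neighborFinset v :=
    Finset.eq_of_subset_of_card_le hsub hle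
  intro w
  rw [← SimpleGraph.mem_neighborFinset, ← heq]
  simp

private lemma buildRho {V : Type*} (C : V → Fin 3) (a b c : V)
    (hab : C a ≠ C b) (hac : C a ≠ C c) (hbc : C b ≠ C c)
    (hexh : ∀ i : Fin 3, i = C a ∨ i = C b ∨ i = C c)
    (va vb vc : ZMod 7) (hvab : va ≠ vb) (hvac : va ≠ vc) (hvbc : vb ≠ vc) :
    ∃ ρ : V → ZMod 7, (∀ v, ρ v = va ∨ ρ v = vb ∨ ρ v = vc) ∧
      (∀ u v, C u ≠ C v → ρ u ≠ ρ v) ∧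
      (∀ v, C v = C a → ρ v = va) ∧ (∀ v, C v = C b → ρ v = vb) ∧
      (∀ v, C v = C c → ρ v = vc) ∧
      (∀ v, ρ v = va → C v = C a) ∧ (∀ v, ρ v = vb → C v = C b) ∧
      (∀ v, ρ v = vc → C v = C c) := by
  classical
  set ρ : V → ZMod 7 := fun v => if C v = C a then va else if C v = C b then vb else vc with hρ
  have fA : ∀ w, C w = C a → ρ w = va := by
    intro w h; simp only [hρ]; rw [if_pos h]
  have fB : ∀ w, C w = C b → ρ w = vb := by
    intro w h; simp only [hρ]; rw [if_neg (by rw [h]; exact hab.symm), if_pos h]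
  have fC : ∀ w, C w = C c → ρ w = vc := by
    intro w h; simp only [hρ]
    rw [if_neg (by rw [h]; exact hac.symm), if_neg (by rw [h]; exact hbc.symm)]
  have heven : ∀ v, ρ v = va ∨ ρ v = vb ∨ ρ v = vc := by
    intro v
    rcases hexh (C v) with h | h | h
    · exact Or.inl (fA v h)
    · exact Or.inr (Or.inl (fB v h))
    · exact Or.inr (Or.inr (fC v h))
  have hinj : ∀ u v, C u ≠ C v → ρ u ≠ ρ v := by
    intro u v hne
    rcases hexh (C u) with h | h | h <;> rcases hexh (C v) with h' | h' | h'
    · exact absurd (h.trans h'.symm) hne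
    · rw [fA u h, fB v h']; exact hvab
    · rw [fA u h, fC v h']; exact hvac
    · rw [fB u h, fA v h']; exact hvab.symm
    · exact absurd (h.trans h'.symm) hne
    · rw [fB u h, fC v h']; exact hvbc
    · rw [fC u h, fA v h']; exact hvac.symm
    · rw [fC u h, fB v h']; exact hvbc.symm
    · exact absurd (h.trans h'.symm) hne
  refine ⟨ρ, heven, hinj, fA, fB, fC, ?_, ?_, ?_⟩
  · intro v h
    rcases hexh (C v) with h' | h' | h'
    · exact h'
    · exact absurd ((fB v h').symm.trans h) (Ne.symm hvab)
    · exact absurd ((fC v h').symm.trans h) (Ne.symm hvac)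
  · intro v h
    rcases hexh (C v) with h' | h' | h'
    · exact absurd ((fA v h').symm.trans h) hvab
    · exact h'
    · exact absurd ((fC v h').symm.trans h) (Ne.symm hvbc)
  · intro v h
    rcases hexh (C v) with h' | h' | h'
    · exact absurd ((fA v h').symm.trans h) hvac
    · exact absurd ((fB v h').symm.trans h) hvbc
    · exact h'
/-- If `ρ` is a proper `{0,2,4}`-colouring of `G - y`, the neighbours of `y` are exactly
`P0, P2, P4` with colours `0, 2, 4`, and `G` has no `(7,2)`-colouring, then `P0` and `P4`
have a common neighbour (other than `y`) of colour `2`. -/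
private lemma plus {V : Type*} (G : SimpleGraph V) (hno : ¬ HasCircColoring G 7 2)
    (y P0 P2 P4 : V) (ρ : V → ZMod 7)
    (heven : ∀ v, ρ v = 0 ∨ ρ v = 2 ∨ ρ v = 4)
    (hprop : ∀ u v, G.Adj u v → u ≠ y → v ≠ y → ρ u ≠ ρ v)
    (hNy : ∀ v, G.Adj y v ↔ (v = P0 ∨ v = P2 ∨ v = P4))
    (h0 : ρ P0 = 0) (h2 : ρ P2 = 2) (h4 : ρ P4 = 4) :
    ∃ w, w ≠ y ∧ G.Adj P0 w ∧ G.Adj w P4 ∧ ρ w = 2 := by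
  classical
  by_contra hcon
  push_neg at hcon
  have hP0y : P0 ≠ y := ((hNy P0).2 (Or.inl rfl)).ne'
  have hP2y : P2 ≠ y := ((hNy P2).2 (Or.inr (Or.inl rfl))).ne'
  have hP4y : P4 ≠ y := ((hNy P4).2 (Or.inr (Or.inr rfl))).ne'
  set S : V → Prop := fun v => v ≠ y ∧ (v = P0 ∨ (ρ v = 2 ∧ G.Adj P0 v) ∨
      (ρ v = 4 ∧ ∃ w, w ≠ y ∧ ρ w = 2 ∧ G.Adj P0 w ∧ G.Adj w v)) with hS
  have hP0S : S P0 := ⟨hP0y, Or.inl rfl⟩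
  have hP4S : ¬ S P4 := by
    rintro ⟨-, h | ⟨hc, -⟩ | ⟨-, w, hw1, hw2, hw3, hw4⟩⟩
    · rw [h] at h4; rw [h0] at h4; exact absurd h4 (by decide)
    · rw [h4] at hc; exact absurd hc (by decide)
    · exact hcon w hw1 hw3 hw4 hw2
  -- members of S coloured 0 are P0
  have hS0 : ∀ w, S w → ρ w = 0 → w = P0 := by
    rintro w ⟨-, h | ⟨hc, -⟩ | ⟨hc, -⟩⟩ h0'
    · exact h
    · rw [h0'] at hc; exact absurd hc (by decide)
    · rw [h0'] at hc; exact absurd hc (by decide)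
  have hS2 : ∀ w, S w → ρ w = 2 → G.Adj P0 w := by
    rintro w ⟨-, h | ⟨-, ha⟩ | ⟨hc, -⟩⟩ h2'
    · rw [h] at h2'; rw [h0] at h2'; exact absurd h2' (by decide)
    · exact ha
    · rw [h2'] at hc; exact absurd hc (by decide)
  set ψ : V → ZMod 7 := fun v => if v = y then 6 else if S v then ρ v + 1 else ρ v with hψ
  have hψy : ψ y = 6 := by simp only [hψ]; rw [if_pos trivial]
  have hψS : ∀ w, S w → ψ w = ρ w + 1 := by
    intro w hw; simp only [hψ]; rw [if_neg hw.1, if_pos hw]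
  have hψn : ∀ w, w ≠ y → ¬ S w → ψ w = ρ w := by
    intro w hw hw'; simp only [hψ]; rw [if_neg hw, if_neg hw']
  have key : ∀ u v, G.Adj u v → (circClique 7 2).Adj (ψ u) (ψ v) := by
    intro u v huv
    by_cases huy : u = y
    · subst huy
      rcases (hNy v).1 huv with h | h | h
      · rw [h, hψy, hψS P0 hP0S, h0]; exact gp (by decide)
      · by_cases hSv : S P2
        · rw [h, hψy, hψS P2 hSv, h2]; exact gp (by decide)
        · rw [h, hψy, hψn P2 hP2y hSv, h2]; exact gp (by decide)
      · rw [h, hψy, hψn P4 hP4y hP4S, h4]; exact gp (by decide)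
    by_cases hvy : v = y
    · subst hvy
      rcases (hNy u).1 huv.symm with h | h | h
      · rw [h, hψy, hψS P0 hP0S, h0]; exact gp (by decide)
      · by_cases hSu : S P2
        · rw [h, hψy, hψS P2 hSu, h2]; exact gp (by decide)
        · rw [h, hψy, hψn P2 hP2y hSu, h2]; exact gp (by decide)
      · rw [h, hψy, hψn P4 hP4y hP4S, h4]; exact gp (by decide)
    have hne := hprop u v huv huy hvy
    by_cases hSu : S u <;> by_cases hSv : S v
    · rw [hψS u hSu, hψS v hSv]
      rcases heven u with h | h | h <;> rcases heven v with h' | h' | h' <;>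
        first
          | exact absurd (h.trans h'.symm) hne
          | (rw [h, h']; exact gp (by decide))
    · rw [hψS u hSu, hψn v hvy hSv]
      rcases heven u with h | h | h <;> rcases heven v with h' | h' | h'
      · exact absurd (h.trans h'.symm) hne
      · -- (0,2) : closure violated
        exact absurd (⟨hvy, Or.inr (Or.inl ⟨h', (hS0 u hSu h) ▸ huv⟩)⟩ : S v) hSv
      · rw [h, h']; exact gp (by decide)
      · rw [h, h']; exact gp (by decide)
      · exact absurd (h.trans h'.symm) hne
      · -- (2,4) : closure violated
        exact absurd (⟨hvy, Or.inr (Or.inr ⟨h', u, huy, h, hS2 u hSu h, huv⟩)⟩ : S v) hSv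
      · rw [h, h']; exact gp (by decide)
      · rw [h, h']; exact gp (by decide)
      · exact absurd (h.trans h'.symm) hne
    · rw [hψn u huy hSu, hψS v hSv]
      rcases heven u with h | h | h <;> rcases heven v with h' | h' | h'
      · exact absurd (h.trans h'.symm) hne
      · rw [h, h']; exact gp (by decide)
      · rw [h, h']; exact gp (by decide)
      · exact absurd (⟨huy, Or.inr (Or.inl ⟨h, (hS0 v hSv h') ▸ huv.symm⟩)⟩ : S u) hSu
      · exact absurd (h.trans h'.symm) hne
      · rw [h, h']; exact gp (by decide)
      · rw [h, h']; exact gp (by decide)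
      · exact absurd (⟨huy, Or.inr (Or.inr ⟨h, v, hvy, h', hS2 v hSv h', huv.symm⟩)⟩ : S u) hSu
      · exact absurd (h.trans h'.symm) hne
    · rw [hψn u huy hSu, hψn v hvy hSv]
      rcases heven u with h | h | h <;> rcases heven v with h' | h' | h' <;>
        first
          | exact absurd (h.trans h'.symm) hne
          | (rw [h, h']; exact gp (by decide))
  exact hno ⟨⟨ψ, fun {a b} h => key a b h⟩⟩
/-- If `x,y,z` is a path of degree-3 vertices with `N(x) = {y,m,n}`, `N(z) = {y,m,n'}`,
`N(y) = {x,z,y'}`, coloured `0,?,2` with `m,n,n'` coloured `4,2,0` and `m ≠ y'`, then `m` and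
`n` have a common neighbour outside `{x,y,z}` (else a `(7,2)`-colouring exists). -/
private lemma lemU {V : Type*} (G : SimpleGraph V) (hno : ¬ HasCircColoring G 7 2)
    (x y z y' m n n' : V) (ρ : V → ZMod 7)
    (heven : ∀ v, ρ v = 0 ∨ ρ v = 2 ∨ ρ v = 4)
    (hprop : ∀ u v, G.Adj u v → u ≠ y → v ≠ y → ρ u ≠ ρ v)
    (hNy : ∀ v, G.Adj y v ↔ (v = x ∨ v = z ∨ v = y'))
    (hNx : ∀ v, G.Adj x v ↔ (v = y ∨ v = m ∨ v = n))
    (hNz : ∀ v, G.Adj z v ↔ (v = y ∨ v = m ∨ v = n'))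
    (hρx : ρ x = 0) (hρz : ρ z = 2) (hρy' : ρ y' = 4)
    (hρm : ρ m = 4) (hρn : ρ n = 2) (hρn' : ρ n' = 0)
    (hmy : m ≠ y) (hny : n ≠ y) (hn'y : n' ≠ y) (hnz : n ≠ z) (hn'x : n' ≠ x)
    (hmy' : m ≠ y') :
    ∃ u, u ≠ x ∧ u ≠ y ∧ u ≠ z ∧ G.Adj m u ∧ G.Adj n u ∧ ρ u = 0 := by
  classical
  by_contra hcon
  push_neg at hcon
  -- basic distinctness
  have hxy : x ≠ y := ((hNx y).2 (Or.inl rfl)).ne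
  have hzy : z ≠ y := ((hNz y).2 (Or.inl rfl)).ne
  have hy'y : y' ≠ y := ((hNy y').2 (Or.inr (Or.inr rfl))).ne'
  have hmx : m ≠ x := ((hNx m).2 (Or.inr (Or.inl rfl))).ne'
  have hnx : n ≠ x := ((hNx n).2 (Or.inr (Or.inr rfl))).ne'
  have hmz : m ≠ z := ((hNz m).2 (Or.inr (Or.inl rfl))).ne'
  have hzx : z ≠ x := fun h => by rw [h, hρx] at hρz; exact absurd hρz (by decide)
  have hy'x : y' ≠ x := fun h => by rw [h, hρx] at hρy'; exact absurd hρy' (by decide)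
  have hzm : z ≠ m := hmz.symm
  have hnm : n ≠ m := fun h => by rw [h, hρm] at hρn; exact absurd hρn (by decide)
  have hy'm : y' ≠ m := hmy'.symm
  have hy'n : y' ≠ n := fun h => by rw [h, hρn] at hρy'; exact absurd hρy' (by decide)
  have hzn : z ≠ n := hnz.symm
  set T : V → Prop := fun v => G.Adj n v ∧ ρ v = 0 ∧ v ≠ x with hT
  have hTy : ¬ T y := by
    rintro ⟨hadj, -, -⟩
    rcases (hNy n).1 hadj.symm with h | h | h
    · exact hnx h
    · exact hnz h
    · exact hy'n h.symm
  have hTz : ¬ T z := fun h => absurd h.2.1 (by rw [hρz]; decide)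
  have hTm : ¬ T m := fun h => absurd h.2.1 (by rw [hρm]; decide)
  have hTn : ¬ T n := fun h => h.1.ne rfl
  have hTy' : ¬ T y' := fun h => absurd h.2.1 (by rw [hρy']; decide)
  -- T-vertices are not adjacent to m (else the common neighbour exists)
  have hTnotm : ∀ v, T v → ¬ G.Adj m v := by
    rintro v ⟨hnv, hv0, hvx⟩ hmv
    have hvy : v ≠ y := fun h => hTy (h ▸ ⟨hnv, hv0, hvx⟩)
    have hvz : v ≠ z := fun h => hTz (h ▸ ⟨hnv, hv0, hvx⟩)
    exact hcon v hvx hvy hvz hmv hnv hv0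
  set ψ : V → ZMod 7 := fun v => if v = y then 6 else if v = x then 3 else if v = m then 5
      else if v = n then 1 else if T v then 6 else ρ v with hψ
  have hψy : ψ y = 6 := by simp only [hψ]; rw [if_pos trivial]
  have hψx : ψ x = 3 := by simp only [hψ]; rw [if_neg hxy, if_pos trivial]
  have hψm : ψ m = 5 := by simp only [hψ]; rw [if_neg hmy, if_neg hmx, if_pos trivial]
  have hψn : ψ n = 1 := by
    simp only [hψ]; rw [if_neg hny, if_neg hnx, if_neg hnm, if_pos trivial]
  have hψT : ∀ v, T v → ψ v = 6 := by
    intro v hv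
    have hvy : v ≠ y := fun h => hTy (h ▸ hv)
    have hvm : v ≠ m := fun h => hTm (h ▸ hv)
    have hvn : v ≠ n := fun h => hTn (h ▸ hv)
    simp only [hψ]; rw [if_neg hvy, if_neg hv.2.2, if_neg hvm, if_neg hvn, if_pos hv]
  have hψg : ∀ v, v ≠ y → v ≠ x → v ≠ m → v ≠ n → ¬ T v → ψ v = ρ v := by
    intro v h1 h2 h3 h4 h5
    simp only [hψ]; rw [if_neg h1, if_neg h2, if_neg h3, if_neg h4, if_neg h5]
  have hψz : ψ z = 2 := by rw [hψg z hzy hzx hzm hzn hTz]; exact hρz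
  have hψy' : ψ y' = 4 := by rw [hψg y' hy'y hy'x hy'm hy'n hTy']; exact hρy'
  have key : ∀ u v, G.Adj u v → (circClique 7 2).Adj (ψ u) (ψ v) := by
    intro u v huv
    by_cases huy : u = y
    · subst huy
      rcases (hNy v).1 huv with h | h | h
      · rw [h, hψy, hψx]; exact gp (by decide)
      · rw [h, hψy, hψz]; exact gp (by decide)
      · rw [h, hψy, hψy']; exact gp (by decide)
    by_cases hvy : v = y
    · subst hvy
      rcases (hNy u).1 huv.symm with h | h | h
      · rw [h, hψy, hψx]; exact gp (by decide)
      · rw [h, hψy, hψz]; exact gp (by decide)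
      · rw [h, hψy, hψy']; exact gp (by decide)
    by_cases hux : u = x
    · subst hux
      rcases (hNx v).1 huv with h | h | h
      · exact absurd h hvy
      · rw [h, hψx, hψm]; exact gp (by decide)
      · rw [h, hψx, hψn]; exact gp (by decide)
    by_cases hvx : v = x
    · subst hvx
      rcases (hNx u).1 huv.symm with h | h | h
      · exact absurd h huy
      · rw [h, hψx, hψm]; exact gp (by decide)
      · rw [h, hψx, hψn]; exact gp (by decide)
    by_cases hum : u = m
    · rw [hum] at huv ⊢
      by_cases hvm : v = m
      · exact absurd hvm.symm huv.ne
      by_cases hvn : v = n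
      · rw [hvn, hψm, hψn]; exact gp (by decide)
      by_cases hvT : T v
      · exact absurd huv (hTnotm v hvT)
      have hne := hprop m v huv hmy hvy
      rw [hψm, hψg v hvy hvx hvm hvn hvT]
      rcases heven v with h | h | h
      · rw [h]; exact gp (by decide)
      · rw [h]; exact gp (by decide)
      · exact absurd (hρm.trans h.symm) hne
    by_cases hvm : v = m
    · rw [hvm] at huv ⊢
      by_cases hun : u = n
      · rw [hun, hψm, hψn]; exact gp (by decide)
      by_cases huT : T u
      · exact absurd huv.symm (hTnotm u huT)
      have hne := hprop u m huv huy hmy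
      rw [hψm, hψg u huy hux hum hun huT]
      rcases heven u with h | h | h
      · rw [h]; exact gp (by decide)
      · rw [h]; exact gp (by decide)
      · exact absurd (h.trans hρm.symm) hne
    by_cases hun : u = n
    · rw [hun] at huv ⊢
      by_cases hvn : v = n
      · exact absurd hvn.symm huv.ne
      by_cases hvT : T v
      · rw [hψn, hψT v hvT]; exact gp (by decide)
      have hne := hprop n v huv hny hvy
      rw [hψn, hψg v hvy hvx hvm hvn hvT]
      rcases heven v with h | h | h
      · exact absurd (⟨huv, h, hvx⟩ : T v) hvT
      · exact absurd (hρn.trans h.symm) hne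
      · rw [h]; exact gp (by decide)
    by_cases hvn : v = n
    · rw [hvn] at huv ⊢
      by_cases huT : T u
      · rw [hψn, hψT u huT]; exact gp (by decide)
      have hne := hprop u n huv huy hny
      rw [hψn, hψg u huy hux hum hun huT]
      rcases heven u with h | h | h
      · exact absurd (⟨huv.symm, h, hux⟩ : T u) huT
      · exact absurd (h.trans hρn.symm) hne
      · rw [h]; exact gp (by decide)
    have hne := hprop u v huv huy hvy
    by_cases huT : T u <;> by_cases hvT : T v
    · exact absurd (huT.2.1.trans hvT.2.1.symm) hne
    · rw [hψT u huT, hψg v hvy hvx hvm hvn hvT]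
      rcases heven v with h | h | h
      · exact absurd (huT.2.1.trans h.symm) hne
      · rw [h]; exact gp (by decide)
      · rw [h]; exact gp (by decide)
    · rw [hψT v hvT, hψg u huy hux hum hun huT]
      rcases heven u with h | h | h
      · exact absurd (h.trans hvT.2.1.symm) hne
      · rw [h]; exact gp (by decide)
      · rw [h]; exact gp (by decide)
    · rw [hψg u huy hux hum hun huT, hψg v hvy hvx hvm hvn hvT]
      rcases heven u with h | h | h <;> rcases heven v with h' | h' | h' <;>
        first
          | exact absurd (h.trans h'.symm) hne
          | (rw [h, h']; exact gp (by decide))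
  exact hno ⟨⟨ψ, fun {a b} h => key a b h⟩⟩
/-- Structure around a path `x,y,z` of degree-3 vertices in a 4-critical graph with no
(7,2)-colouring. -/
theorem stmt_12 {V : Type*} [Fintype V] (G : SimpleGraph V) [DecidableRel G.Adj]
    (hcrit : FourCritical G) (hno : ¬ HasCircColoring G 7 2)
    (x y z y' : V) (hxy : x ≠ y) (hxz : x ≠ z) (hyz : y ≠ z)
    (hdx : G.degree x = 3) (hdy : G.degree y = 3) (hdz : G.degree z = 3)
    (hexy : G.Adj x y) (heyz : G.Adj y z) (hexz : ¬ G.Adj x z)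
    (hy' : G.Adj y y') (hy'x : y' ≠ x) (hy'z : y' ≠ z) :
    ∃ x' x'' z' z'' : V,
      G.Adj x x' ∧ G.Adj x x'' ∧ x' ≠ x'' ∧ x' ≠ y ∧ x'' ≠ y ∧
      G.Adj z z' ∧ G.Adj z z'' ∧ z' ≠ z'' ∧ z' ≠ y ∧ z'' ≠ y ∧
      x' = z' ∧ G.Adj y' x'' ∧ G.Adj y' z'' ∧ x'' ≠ z'' ∧
      (x' ≠ y' → ∃ u w : V, u ≠ w ∧ u ∉ ({x, y, z} : Set V) ∧ w ∉ ({x, y, z} : Set V) ∧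
        G.Adj u x' ∧ G.Adj u x'' ∧ G.Adj w x' ∧ G.Adj w z'') := by
  classical
  obtain ⟨hnc, hdel⟩ := hcrit
  -- a 3-colouring of G minus the edge xy
  obtain ⟨C⟩ := hdel s(x, y) (G.mem_edgeSet.mpr hexy)
  have hNy0 : ∀ v, G.Adj y v ↔ (v = x ∨ v = z ∨ v = y') :=
    nbhd_eq G hdy hxz hy'x.symm hy'z.symm hexy.symm heyz hy'
  -- C is proper on all edges not incident to y
  have hpropC : ∀ u v, G.Adj u v → u ≠ y → v ≠ y → C u ≠ C v := by
    intro u v h hu hv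
    apply C.valid
    rw [SimpleGraph.deleteEdges_adj]
    refine ⟨h, ?_⟩
    simp only [Set.mem_singleton_iff]
    intro hs
    rw [Sym2.eq_iff] at hs
    rcases hs with ⟨-, h2⟩ | ⟨h1, -⟩
    · exact hv h2
    · exact hu h1
  -- every colour is used on {x, z, y'}
  have hcover : ∀ c : Fin 3, c = C x ∨ c = C z ∨ c = C y' := by
    intro c
    by_contra hc
    push_neg at hc
    obtain ⟨h1, h2, h3⟩ := hc
    apply hnc
    refine ⟨SimpleGraph.Coloring.mk (fun v => if v = y then c else C v) ?_⟩
    intro u v huv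
    show (if u = y then c else C u) ≠ (if v = y then c else C v)
    by_cases huy : u = y
    · have hvy : v ≠ y := fun h => huv.ne (huy.trans h.symm)
      rw [if_pos huy, if_neg hvy]
      rcases (hNy0 v).1 (huy ▸ huv) with h | h | h <;> rw [h]
      · exact h1
      · exact h2
      · exact h3
    · by_cases hvy : v = y
      · rw [if_neg huy, if_pos hvy]
        rcases (hNy0 u).1 (hvy ▸ huv.symm) with h | h | h <;> rw [h]
        · exact fun hh => h1 hh.symm
        · exact fun hh => h2 hh.symm
        · exact fun hh => h3 hh.symm
      · rw [if_neg huy, if_neg hvy]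
        exact hpropC u v huv huy hvy
  -- the three colours on x, z, y' are pairwise distinct
  have hf3 : ∀ a b : Fin 3, ¬ (∀ c : Fin 3, c = a ∨ c = b) := by decide
  have hCxz : C x ≠ C z := by
    intro h
    exact hf3 (C z) (C y') fun c => by
      rcases hcover c with h' | h' | h'
      · exact Or.inl (h'.trans h)
      · exact Or.inl h'
      · exact Or.inr h'
  have hCxy' : C x ≠ C y' := by
    intro h
    exact hf3 (C z) (C y') fun c => by
      rcases hcover c with h' | h' | h'
      · exact Or.inr (h'.trans h)
      · exact Or.inl h'
      · exact Or.inr h'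
  have hCzy' : C z ≠ C y' := by
    intro h
    exact hf3 (C x) (C y') fun c => by
      rcases hcover c with h' | h' | h'
      · exact Or.inl h'
      · exact Or.inr (h'.trans h)
      · exact Or.inr h'
  -- three ZMod 7 colourings
  obtain ⟨ρ1, he1, hi1, f1x, f1z, f1y', g1x, g1z, g1y'⟩ :=
    buildRho C x z y' hCxz hCxy' hCzy' hcover 0 4 2 (by decide) (by decide) (by decide)
  obtain ⟨ρ2, he2, hi2, f2x, f2z, f2y', g2x, g2z, g2y'⟩ :=
    buildRho C x z y' hCxz hCxy' hCzy' hcover 0 2 4 (by decide) (by decide) (by decide)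
  obtain ⟨ρ3, he3, hi3, f3x, f3z, f3y', g3x, g3z, g3y'⟩ :=
    buildRho C x z y' hCxz hCxy' hCzy' hcover 2 0 4 (by decide) (by decide) (by decide)
  have hp1 : ∀ u v, G.Adj u v → u ≠ y → v ≠ y → ρ1 u ≠ ρ1 v :=
    fun u v h hu hv => hi1 u v (hpropC u v h hu hv)
  have hp2 : ∀ u v, G.Adj u v → u ≠ y → v ≠ y → ρ2 u ≠ ρ2 v :=
    fun u v h hu hv => hi2 u v (hpropC u v h hu hv)
  have hp3 : ∀ u v, G.Adj u v → u ≠ y → v ≠ y → ρ3 u ≠ ρ3 v :=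
    fun u v h hu hv => hi3 u v (hpropC u v h hu hv)
  have he1' : ∀ v, ρ1 v = 0 ∨ ρ1 v = 2 ∨ ρ1 v = 4 := by
    intro v; rcases he1 v with h | h | h
    · exact Or.inl h
    · exact Or.inr (Or.inr h)
    · exact Or.inr (Or.inl h)
  have he3' : ∀ v, ρ3 v = 0 ∨ ρ3 v = 2 ∨ ρ3 v = 4 := by
    intro v; rcases he3 v with h | h | h
    · exact Or.inr (Or.inl h)
    · exact Or.inl h
    · exact Or.inr (Or.inr h)
  -- get m : common neighbour of x and z, coloured like y'
  obtain ⟨m, hmy, hxm, hmz, hρ1m⟩ :=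
    plus G hno y x y' z ρ1 he1' hp1
      (fun v => by rw [hNy0 v]; tauto) (f1x x rfl) (f1y' y' rfl) (f1z z rfl)
  have hCm : C m = C y' := g1y' m hρ1m
  -- get n : common neighbour of x and y', coloured like z
  obtain ⟨n, hny, hxn, hny', hρ2n⟩ :=
    plus G hno y x z y' ρ2 he2 hp2 hNy0 (f2x x rfl) (f2z z rfl) (f2y' y' rfl)
  have hCn : C n = C z := g2z n hρ2n
  -- get n' : common neighbour of z and y', coloured like x
  obtain ⟨n', hn'y, hzn', hn'y', hρ3n'⟩ :=
    plus G hno y z x y' ρ3 he3' hp3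
      (fun v => by rw [hNy0 v]; tauto) (f3z z rfl) (f3x x rfl) (f3y' y' rfl)
  have hCn' : C n' = C x := g3x n' hρ3n'
  -- distinctness
  have hmn : m ≠ n := by
    intro h; rw [h, hCn] at hCm; exact hCzy' hCm
  have hmn' : m ≠ n' := by
    intro h; rw [h, hCn'] at hCm; exact hCxy' hCm
  have hnn' : n ≠ n' := by
    intro h; rw [h, hCn'] at hCn; exact hCxz hCn
  have hmz' : G.Adj z m := hmz.symm
  have hnz : n ≠ z := fun h => hexz (h ▸ hxn)
  have hn'x : n' ≠ x := fun h => hexz (h ▸ hzn').symm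
  -- neighbourhoods of x and z
  have hNx : ∀ v, G.Adj x v ↔ (v = y ∨ v = m ∨ v = n) :=
    nbhd_eq G hdx hmy.symm hny.symm hmn hexy hxm hxn
  have hNz : ∀ v, G.Adj z v ↔ (v = y ∨ v = m ∨ v = n') :=
    nbhd_eq G hdz hmy.symm hn'y.symm hmn' heyz.symm hmz' hzn'
  refine ⟨m, n, m, n', hxm, hxn, hmn, hmy, hny, hmz', hzn', hmn', hmy, hn'y, rfl,
    hny'.symm, hn'y'.symm, hnn', ?_⟩
  intro hmy'
  -- first application of lemU : common neighbour u of m and n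
  have hρ2 : ρ2 m = 4 ∧ ρ2 n = 2 ∧ ρ2 n' = 0 :=
    ⟨f2y' m hCm, f2z n hCn, f2x n' hCn'⟩
  obtain ⟨u, hux, huy, huz, hmu, hnu, hρ2u⟩ :=
    lemU G hno x y z y' m n n' ρ2 he2 hp2 hNy0 hNx hNz
      (f2x x rfl) (f2z z rfl) (f2y' y' rfl) hρ2.1 hρ2.2.1 hρ2.2.2
      hmy hny hn'y hnz hn'x hmy'
  have hCu : C u = C x := g2x u hρ2u
  -- second application with the roles of x and z swapped
  have hρ3' : ρ3 m = 4 ∧ ρ3 n' = 2 ∧ ρ3 n = 0 :=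
    ⟨f3y' m hCm, f3x n' hCn', f3z n hCn⟩
  obtain ⟨w, hwz, hwy, hwx, hmw, hn'w, hρ3w⟩ :=
    lemU G hno z y x y' m n' n ρ3 he3' hp3
      (fun v => by rw [hNy0 v]; tauto) hNz hNx
      (f3z z rfl) (f3x x rfl) (f3y' y' rfl) hρ3'.1 hρ3'.2.1 hρ3'.2.2
      hmy hn'y hny hn'x hnz hmy'
  have hCw : C w = C z := g3z w hρ3w
  have huw : u ≠ w := by
    intro h; rw [h, hCw] at hCu; exact hCxz hCu.symm
  refine ⟨u, w, huw, ?_, ?_, hmu.symm, hnu.symm, hmw.symm, hn'w.symm⟩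
  · simp only [Set.mem_insert_iff, Set.mem_singleton_iff]
    push_neg
    exact ⟨hux, huy, huz⟩
  · simp only [Set.mem_insert_iff, Set.mem_singleton_iff]
    push_neg
    exact ⟨hwx, hwy, hwz⟩
end

section
/- Let G be a finite simple 4-critical graph with no (7,2)-colouute, and let v be a vertex of G with neighbourhood N(v) = {x, y, z}. Then for every pair of distinct vertices w, t ∈ {x, y, z}, either wt ∈ E(G) or there exists a vertex different from v adjacent to both w and t. Moreover, one can choose for each non-adjacent pair {w, t} ⊆ {x, y, z} a common neighbour of w and t different from v in such a way that distinct non-adjacent pairs receive distinct common neighbours. -/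
open SimpleGraph

lemma fin3_pick : ∀ p q : Fin 3, ∃ k : Fin 3, k ≠ p ∧ k ≠ q := by decide

lemma fin3_four : ∀ a b c d : Fin 3, a ≠ b → a ≠ c → b ≠ c → d ≠ a → d ≠ b → d ≠ c → False := by
  decide

lemma fin3_total : ∀ a b c d : Fin 3, a ≠ b → a ≠ c → b ≠ c → (d = a ∨ d = b ∨ d = c) := by
  decide

lemma adj72 : ∀ i j : ZMod 7,
    (i ≠ j ∧ (2 ≤ (i - j).val ∧ (i - j).val ≤ 5) ∧ (2 ≤ (j - i).val ∧ (j - i).val ≤ 5)) →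
    (circClique 7 2).Adj i j := fun _ _ h => h

lemma colouring_aux {V : Type*} (G : SimpleGraph V)
    (hcrit : FourCritical G) (v a b c : V)
    (hab : a ≠ b) (hac : a ≠ c) (hN : G.neighborSet v = {a, b, c}) :
    ∃ C : V → Fin 3,
      (∀ p q : V, G.Adj p q → ¬(p = v ∧ q = a) → ¬(p = a ∧ q = v) → C p ≠ C q) ∧
      C v = C a ∧ C a ≠ C b ∧ C a ≠ C c ∧ C b ≠ C c := by
  classical
  have hva : G.Adj v a := (G.mem_neighborSet v a).mp (by rw [hN]; simp)
  have hvb : G.Adj v b := (G.mem_neighborSet v b).mp (by rw [hN]; simp)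
  have hvc : G.Adj v c := (G.mem_neighborSet v c).mp (by rw [hN]; simp)
  have hav : a ≠ v := (G.ne_of_adj hva).symm
  have hbv : b ≠ v := (G.ne_of_adj hvb).symm
  have hcv : c ≠ v := (G.ne_of_adj hvc).symm
  obtain ⟨C⟩ := hcrit.2 s(v, a) ((G.mem_edgeSet).mpr hva)
  have hCp : ∀ p q : V, G.Adj p q → ¬(p = v ∧ q = a) → ¬(p = a ∧ q = v) → C p ≠ C q := by
    intro p q hpq h1 h2
    apply C.valid
    rw [deleteEdges_adj]
    refine ⟨hpq, ?_⟩
    simp only [Set.mem_singleton_iff, Sym2.eq_iff]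
    tauto
  have hNv : ∀ q, G.Adj v q → q = a ∨ q = b ∨ q = c := by
    intro q h
    have : q ∈ G.neighborSet v := (G.mem_neighborSet v q).mpr h
    rw [hN] at this; simpa using this
  have h1 : C v = C a := by
    by_contra hne
    refine hcrit.1 ⟨Coloring.mk C ?_⟩
    intro p q hpq
    by_cases hp : p = v ∧ q = a
    · obtain ⟨rfl, rfl⟩ := hp; exact hne
    · by_cases hq : p = a ∧ q = v
      · obtain ⟨rfl, rfl⟩ := hq; exact fun h => hne h.symm
      · exact hCp _ _ hpq hp hq
  have h2 : C a ≠ C b := by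
    have := hCp v b hvb (fun h => hab h.2.symm) (fun h => hav h.1.symm)
    rwa [h1] at this
  have h3 : C a ≠ C c := by
    have := hCp v c hvc (fun h => hac h.2.symm) (fun h => hav h.1.symm)
    rwa [h1] at this
  have h4 : C b ≠ C c := by
    by_contra hbceq
    obtain ⟨k, hk1, hk2⟩ := fin3_pick (C a) (C b)
    refine hcrit.1 ⟨Coloring.mk (fun w => if w = v then k else C w) ?_⟩
    intro p q hpq
    by_cases hp : p = v
    · have hq : q ≠ v := fun h => G.irrefl (by rwa [hp, h] at hpq)
      simp only [if_pos hp, if_neg hq]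
      rcases hNv q (by rwa [hp] at hpq) with h | h | h <;> rw [h]
      · exact hk1
      · exact hk2
      · rw [← hbceq]; exact hk2
    · by_cases hq : q = v
      · simp only [if_pos hq, if_neg hp]
        have hpv : G.Adj v p := by rw [← hq]; exact hpq.symm
        rcases hNv p hpv with h | h | h <;> rw [h]
        · exact hk1.symm
        · exact hk2.symm
        · rw [← hbceq]; exact fun h => hk2 h.symm
      · simp only [if_neg hp, if_neg hq]
        exact hCp p q hpq (fun h => hp h.1) (fun h => hq h.2)
  exact ⟨C, hCp, h1, h2, h3, h4⟩

lemma no_univ {V : Type*} (G : SimpleGraph V)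
    (hcrit : FourCritical G) (v a b c u : V)
    (hab : a ≠ b) (hac : a ≠ c) (hN : G.neighborSet v = {a, b, c})
    (hu : u ≠ v) (h1 : G.Adj u a) (h2 : G.Adj u b) (h3 : G.Adj u c) : False := by
  obtain ⟨C, hCp, hva, hb, hc, hbc'⟩ := colouring_aux G hcrit v a b c hab hac hN
  have hvb : G.Adj v b := (G.mem_neighborSet v b).mp (by rw [hN]; simp)
  have hvc : G.Adj v c := (G.mem_neighborSet v c).mp (by rw [hN]; simp)
  have d1 : C u ≠ C a := hCp u a h1 (fun h => hu h.1) (fun h => (G.ne_of_adj h1) h.1)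
  have d2 : C u ≠ C b := hCp u b h2 (fun h => hu h.1) (fun h => (G.ne_of_adj hvb).symm h.2)
  have d3 : C u ≠ C c := hCp u c h3 (fun h => hu h.1) (fun h => (G.ne_of_adj hvc).symm h.2)
  exact fin3_four (C a) (C b) (C c) (C u) hb hc hbc' d1 d2 d3

lemma key {V : Type*} (G : SimpleGraph V)
    (hcrit : FourCritical G) (hno : ¬ HasCircColoring G 7 2)
    (v a b c : V) (hab : a ≠ b) (hac : a ≠ c) (hbc : b ≠ c)
    (hN : G.neighborSet v = {a, b, c}) (hnadj : ¬ G.Adj a b) :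
    ∃ u : V, u ≠ v ∧ G.Adj u a ∧ G.Adj u b := by
  classical
  by_contra hcom
  push_neg at hcom
  obtain ⟨C, hCp, hCva, hCab, hCac, hCbc⟩ := colouring_aux G hcrit v a b c hab hac hN
  have hva : G.Adj v a := (G.mem_neighborSet v a).mp (by rw [hN]; simp)
  have hvb : G.Adj v b := (G.mem_neighborSet v b).mp (by rw [hN]; simp)
  have hvc : G.Adj v c := (G.mem_neighborSet v c).mp (by rw [hN]; simp)
  have hav : a ≠ v := (G.ne_of_adj hva).symm
  have hbv : b ≠ v := (G.ne_of_adj hvb).symm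
  have hcv : c ≠ v := (G.ne_of_adj hvc).symm
  have hNv : ∀ q, G.Adj v q → q = a ∨ q = b ∨ q = c := by
    intro q h
    have : q ∈ G.neighborSet v := (G.mem_neighborSet v q).mpr h
    rw [hN] at this; simpa using this
  -- properness off the special pair
  have hprop : ∀ p q : V, G.Adj p q → p ≠ v → p ≠ a → C p ≠ C q :=
    fun p q h h1 h2 => hCp p q h (fun hh => h1 hh.1) (fun hh => h2 hh.1)
  set φ : V → ZMod 7 := fun u =>
    if u = v then 1 else if u = a then 6 else if u = b then 3
    else if C u = C c ∧ G.Adj u b then 5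
    else if C u = C a then 0 else if C u = C b then 2 else 4 with hφdef
  have hφv : φ v = 1 := by simp [hφdef]
  have hφa : φ a = 6 := by simp [hφdef, hav]
  have hφb : φ b = 3 := by simp [hφdef, hbv, (Ne.symm hab)]
  have hφS : ∀ p, p ≠ v → p ≠ a → p ≠ b → C p = C c → G.Adj p b → φ p = 5 := by
    intro p h1 h2 h3 h4 h5
    simp only [hφdef]
    rw [if_neg h1, if_neg h2, if_neg h3, if_pos ⟨h4, h5⟩]
  have hφA : ∀ p, p ≠ v → p ≠ a → p ≠ b → C p = C a → φ p = 0 := by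
    intro p h1 h2 h3 h4
    simp only [hφdef]
    rw [if_neg h1, if_neg h2, if_neg h3,
      if_neg (by rintro ⟨hc, -⟩; exact hCac (h4.symm.trans hc)), if_pos h4]
  have hφB : ∀ p, p ≠ v → p ≠ a → p ≠ b → C p = C b → φ p = 2 := by
    intro p h1 h2 h3 h4
    simp only [hφdef]
    rw [if_neg h1, if_neg h2, if_neg h3,
      if_neg (by rintro ⟨hc, -⟩; exact hCbc (h4.symm.trans hc)),
      if_neg (by intro hc; exact hCab (h4.symm.trans hc).symm), if_pos h4]
  have hφC : ∀ p, p ≠ v → p ≠ a → p ≠ b → C p = C c → ¬ G.Adj p b → φ p = 4 := by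
    intro p h1 h2 h3 h4 h5
    simp only [hφdef]
    rw [if_neg h1, if_neg h2, if_neg h3,
      if_neg (by rintro ⟨-, hc⟩; exact h5 hc),
      if_neg (by intro hc; exact hCac (hc.symm.trans h4)),
      if_neg (by intro hc; exact hCbc (hc.symm.trans h4))]
  apply hno
  refine ⟨⟨φ, ?_⟩⟩
  intro p q hpq
  show (circClique 7 2).Adj (φ p) (φ q)
  -- classify q: helper producing the adjacency given φ values
  by_cases hp : p = v
  · -- p = v
    have hq : q ≠ v := fun h => G.irrefl (by rwa [hp, h] at hpq)
    rw [hp, hφv]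
    by_cases hqa : q = a
    · rw [hqa, hφa]; exact adj72 _ _ (by decide)
    by_cases hqb : q = b
    · rw [hqb, hφb]; exact adj72 _ _ (by decide)
    have hqc : q = c := by
      rcases hNv q (by rwa [hp] at hpq) with h|h|h
      · exact absurd h hqa
      · exact absurd h hqb
      · exact h
    by_cases hcb : G.Adj q b
    · rw [hφS q hq hqa hqb (by rw [hqc]) hcb]; exact adj72 _ _ (by decide)
    · rw [hφC q hq hqa hqb (by rw [hqc]) hcb]; exact adj72 _ _ (by decide)
  by_cases hpa : p = a
  · -- p = a
    rw [hpa, hφa]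
    by_cases hq : q = v
    · rw [hq, hφv]; exact adj72 _ _ (by decide)
    by_cases hqa : q = a
    · exact absurd (by rwa [hpa, hqa] at hpq) (G.irrefl)
    by_cases hqb : q = b
    · exact absurd (by rwa [hpa, hqb] at hpq) hnadj
    rcases fin3_total (C a) (C b) (C c) (C q) hCab hCac hCbc with h|h|h
    · exact absurd (hprop q a (by rw [hpa] at hpq; exact hpq.symm) hq hqa).symm (by simp [h])
    · rw [hφB q hq hqa hqb h]; exact adj72 _ _ (by decide)
    · by_cases hcb : G.Adj q b
      · exact absurd hcb (hcom q hq (by rw [hpa] at hpq; exact hpq.symm))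
      · rw [hφC q hq hqa hqb h hcb]; exact adj72 _ _ (by decide)
  by_cases hpb : p = b
  · -- p = b
    rw [hpb, hφb]
    by_cases hq : q = v
    · rw [hq, hφv]; exact adj72 _ _ (by decide)
    by_cases hqa : q = a
    · rw [hqa, hφa]; exact adj72 _ _ (by decide)
    by_cases hqb : q = b
    · exact absurd (by rwa [hpb, hqb] at hpq) (G.irrefl)
    rcases fin3_total (C a) (C b) (C c) (C q) hCab hCac hCbc with h|h|h
    · rw [hφA q hq hqa hqb h]; exact adj72 _ _ (by decide)
    · exact absurd (hprop q b (by rw [hpb] at hpq; exact hpq.symm) hq hqa).symm (by simp [h])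
    · by_cases hcb : G.Adj q b
      · rw [hφS q hq hqa hqb h hcb]; exact adj72 _ _ (by decide)
      · exact absurd (by rw [hpb] at hpq; exact hpq.symm) hcb
  -- p ∉ {v, a, b}
  have hqv_c : q = v → p = c := by
    intro h
    rcases hNv p (by rw [← h]; exact hpq.symm) with h'|h'|h'
    · exact absurd h' hpa
    · exact absurd h' hpb
    · exact h'
  rcases fin3_total (C a) (C b) (C c) (C p) hCab hCac hCbc with hP|hP|hP
  · -- C p = C a : φ p = 0
    rw [hφA p hp hpa hpb hP]
    by_cases hq : q = v
    · exact absurd ((hqv_c hq) ▸ hP) (Ne.symm hCac)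
    by_cases hqa : q = a
    · exact absurd hP (by rw [← hqa]; exact hprop p q hpq hp hpa)
    by_cases hqb : q = b
    · rw [hqb, hφb]; exact adj72 _ _ (by decide)
    rcases fin3_total (C a) (C b) (C c) (C q) hCab hCac hCbc with h|h|h
    · exact absurd (hP.trans h.symm) (hprop p q hpq hp hpa)
    · rw [hφB q hq hqa hqb h]; exact adj72 _ _ (by decide)
    · by_cases hcb : G.Adj q b
      · rw [hφS q hq hqa hqb h hcb]; exact adj72 _ _ (by decide)
      · rw [hφC q hq hqa hqb h hcb]; exact adj72 _ _ (by decide)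
  · -- C p = C b : φ p = 2
    rw [hφB p hp hpa hpb hP]
    by_cases hq : q = v
    · exact absurd ((hqv_c hq) ▸ hP) (Ne.symm hCbc)
    by_cases hqa : q = a
    · rw [hqa, hφa]; exact adj72 _ _ (by decide)
    by_cases hqb : q = b
    · exact absurd hP (by rw [← hqb]; exact hprop p q hpq hp hpa)
    rcases fin3_total (C a) (C b) (C c) (C q) hCab hCac hCbc with h|h|h
    · rw [hφA q hq hqa hqb h]; exact adj72 _ _ (by decide)
    · exact absurd (hP.trans h.symm) (hprop p q hpq hp hpa)
    · by_cases hcb : G.Adj q b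
      · rw [hφS q hq hqa hqb h hcb]; exact adj72 _ _ (by decide)
      · rw [hφC q hq hqa hqb h hcb]; exact adj72 _ _ (by decide)
  · -- C p = C c
    by_cases hpSb : G.Adj p b
    · -- φ p = 5
      rw [hφS p hp hpa hpb hP hpSb]
      by_cases hq : q = v
      · rw [hq, hφv]; exact adj72 _ _ (by decide)
      by_cases hqa : q = a
      · exact absurd hpSb (hcom p hp (by rwa [hqa] at hpq))
      by_cases hqb : q = b
      · rw [hqb, hφb]; exact adj72 _ _ (by decide)
      rcases fin3_total (C a) (C b) (C c) (C q) hCab hCac hCbc with h|h|h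
      · rw [hφA q hq hqa hqb h]; exact adj72 _ _ (by decide)
      · rw [hφB q hq hqa hqb h]; exact adj72 _ _ (by decide)
      · exact absurd (hP.trans h.symm) (hprop p q hpq hp hpa)
    · -- φ p = 4
      rw [hφC p hp hpa hpb hP hpSb]
      by_cases hq : q = v
      · rw [hq, hφv]; exact adj72 _ _ (by decide)
      by_cases hqa : q = a
      · rw [hqa, hφa]; exact adj72 _ _ (by decide)
      by_cases hqb : q = b
      · exact absurd (by rwa [hqb] at hpq) hpSb
      rcases fin3_total (C a) (C b) (C c) (C q) hCab hCac hCbc with h|h|h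
      · rw [hφA q hq hqa hqb h]; exact adj72 _ _ (by decide)
      · rw [hφB q hq hqa hqb h]; exact adj72 _ _ (by decide)
      · exact absurd (hP.trans h.symm) (hprop p q hpq hp hpa)

/-- Around a degree-3 vertex `v` with neighbours `x,y,z` in a 4-critical graph with no
(7,2)-colouring: each non-adjacent pair among `{x,y,z}` has a common neighbour other
than `v`, and such common neighbours can be chosen distinct for distinct pairs. -/
theorem stmt_15 {V : Type*} [Fintype V] (G : SimpleGraph V) [DecidableRel G.Adj]
    (hcrit : FourCritical G) (hno : ¬ HasCircColoring G 7 2)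
    (v x y z : V) (hxy : x ≠ y) (hxz : x ≠ z) (hyz : y ≠ z)
    (hN : G.neighborSet v = {x, y, z}) :
    (∀ w t : V, w ∈ ({x, y, z} : Set V) → t ∈ ({x, y, z} : Set V) → w ≠ t →
      G.Adj w t ∨ ∃ u : V, u ≠ v ∧ G.Adj u w ∧ G.Adj u t) ∧
    ∃ g : Sym2 V → V,
      (∀ w t : V, w ∈ ({x, y, z} : Set V) → t ∈ ({x, y, z} : Set V) → w ≠ t →
        ¬ G.Adj w t →
        g s(w, t) ≠ v ∧ G.Adj (g s(w, t)) w ∧ G.Adj (g s(w, t)) t) ∧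
      (∀ w t w' t' : V, w ∈ ({x, y, z} : Set V) → t ∈ ({x, y, z} : Set V) →
        w' ∈ ({x, y, z} : Set V) → t' ∈ ({x, y, z} : Set V) →
        w ≠ t → w' ≠ t' → ¬ G.Adj w t → ¬ G.Adj w' t' → s(w, t) ≠ s(w', t') →
        g s(w, t) ≠ g s(w', t')) := by
  classical
  have hN1 : G.neighborSet v = {x, z, y} := by rw [hN]; ext u; simp; tauto
  have hN2 : G.neighborSet v = {y, x, z} := by rw [hN]; ext u; simp; tauto
  have hN3 : G.neighborSet v = {y, z, x} := by rw [hN]; ext u; simp; tauto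
  have hN4 : G.neighborSet v = {z, x, y} := by rw [hN]; ext u; simp; tauto
  have hN5 : G.neighborSet v = {z, y, x} := by rw [hN]; ext u; simp; tauto
  have hP1 : ∀ w t : V, w ∈ ({x, y, z} : Set V) → t ∈ ({x, y, z} : Set V) → w ≠ t →
      G.Adj w t ∨ ∃ u : V, u ≠ v ∧ G.Adj u w ∧ G.Adj u t := by
    intro w t hw ht hwt
    by_cases hadj : G.Adj w t
    · exact Or.inl hadj
    right
    simp only [Set.mem_insert_iff, Set.mem_singleton_iff] at hw ht
    rcases hw with h | h | h <;> rcases ht with h' | h' | h' <;>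
      rw [h, h'] at hadj hwt ⊢
    · exact absurd rfl hwt
    · exact key G hcrit hno v x y z hxy hxz hyz hN hadj
    · exact key G hcrit hno v x z y hxz hxy hyz.symm hN1 hadj
    · exact key G hcrit hno v y x z hxy.symm hyz hxz hN2 hadj
    · exact absurd rfl hwt
    · exact key G hcrit hno v y z x hyz hxy.symm hxz.symm hN3 hadj
    · exact key G hcrit hno v z x y hxz.symm hyz.symm hxy hN4 hadj
    · exact key G hcrit hno v z y x hyz.symm hxz.symm hxy.symm hN5 hadj
    · exact absurd rfl hwt
  haveI : Nonempty V := ⟨v⟩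
  refine ⟨hP1, fun e => Classical.epsilon fun u => u ≠ v ∧ ∀ r ∈ e, G.Adj u r, ?_, ?_⟩
  · intro w t hw ht hwt hna
    obtain ⟨u, hu1, hu2, hu3⟩ := (hP1 w t hw ht hwt).resolve_left hna
    have hspec := Classical.epsilon_spec
      (p := fun u => u ≠ v ∧ ∀ r ∈ (s(w, t) : Sym2 V), G.Adj u r)
      ⟨u, hu1, by intro r hr; rw [Sym2.mem_iff] at hr; rcases hr with rfl | rfl
                  exacts [hu2, hu3]⟩
    exact ⟨hspec.1, hspec.2 w (Sym2.mem_mk_left w t), hspec.2 t (Sym2.mem_mk_right w t)⟩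
  · intro w t w' t' hw ht hw' ht' hwt hw't' hna hna' hPQ heq
    obtain ⟨u, hu1, hu2, hu3⟩ := (hP1 w t hw ht hwt).resolve_left hna
    obtain ⟨u', hu1', hu2', hu3'⟩ := (hP1 w' t' hw' ht' hw't').resolve_left hna'
    have hs1 := Classical.epsilon_spec
      (p := fun u => u ≠ v ∧ ∀ r ∈ (s(w, t) : Sym2 V), G.Adj u r)
      ⟨u, hu1, by intro r hr; rw [Sym2.mem_iff] at hr; rcases hr with rfl | rfl
                  exacts [hu2, hu3]⟩
    have hs2 := Classical.epsilon_spec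
      (p := fun u => u ≠ v ∧ ∀ r ∈ (s(w', t') : Sym2 V), G.Adj u r)
      ⟨u', hu1', by intro r hr; rw [Sym2.mem_iff] at hr; rcases hr with rfl | rfl
                    exacts [hu2', hu3']⟩
    beta_reduce at heq
    rw [← heq] at hs2
    obtain ⟨hn, hA⟩ := hs1
    obtain ⟨-, hB⟩ := hs2
    obtain ⟨U, hn, a1, a2, a3, a4⟩ :
        ∃ U : V, U ≠ v ∧ G.Adj U w ∧ G.Adj U t ∧ G.Adj U w' ∧ G.Adj U t' :=
      ⟨_, hn, hA w (Sym2.mem_mk_left w t), hA t (Sym2.mem_mk_right w t),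
        hB w' (Sym2.mem_mk_left w' t'), hB t' (Sym2.mem_mk_right w' t')⟩
    simp only [Set.mem_insert_iff, Set.mem_singleton_iff] at hw ht hw' ht'
    rcases hw with h1 | h1 | h1 <;> rcases ht with h2 | h2 | h2 <;>
      rcases hw' with h3 | h3 | h3 <;> rcases ht' with h4 | h4 | h4 <;>
      rw [h1] at a1 hwt hPQ <;> rw [h2] at a2 hwt hPQ <;>
      rw [h3] at a3 hw't' hPQ <;> rw [h4] at a4 hw't' hPQ <;>
    first
      | exact hwt rfl
      | exact hw't' rfl
      | exact hPQ rfl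
      | exact hPQ Sym2.eq_swap
      | exact no_univ G hcrit v x y z U hxy hxz hN hn (by assumption) (by assumption)
          (by assumption)
end

section
/- Let G be a finite simple 4-critical graph with no (7,2)-colouring. Let w and t be adjacent vertices of G, each of degree 3, with a common neighbour a. Let b be the neighbour of w other than a and t, and let c be the neighbour of t other than a and w. Then ab ∈ E(G) and ac ∈ E(G). -/
open SimpleGraph

lemma circ7_adj (x y : ZMod 7)
    (h : x ≠ y ∧ (2 ≤ (x - y).val ∧ (x - y).val ≤ 7 - 2)
      ∧ (2 ≤ (y - x).val ∧ (y - x).val ≤ 7 - 2)) :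
    (circClique 7 2).Adj x y := h

lemma fin3_ex : ∀ A B C : Fin 3, ¬(A ≠ B ∧ C = B) →
    ∃ x y : Fin 3, x ≠ A ∧ x ≠ B ∧ y ≠ A ∧ y ≠ C ∧ x ≠ y := by decide

lemma fin3_third : ∀ p q r s : Fin 3, p ≠ q → r ≠ p → r ≠ q → s ≠ p → s ≠ q → r = s := by
  decide

lemma adjAB {V : Type*} [Fintype V] (G : SimpleGraph V) [DecidableRel G.Adj]
    (hcrit : FourCritical G) (hno : ¬ HasCircColoring G 7 2)
    (w t a b c : V)
    (hdw : G.degree w = 3) (hdt : G.degree t = 3)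
    (hwt : G.Adj w t) (hwa : G.Adj w a) (hta : G.Adj t a)
    (hwb : G.Adj w b) (hba : b ≠ a) (hbt : b ≠ t)
    (htc : G.Adj t c) (hca : c ≠ a) (hcw : c ≠ w) :
    G.Adj a b := by
  classical
  by_contra hab
  have hwt' : w ≠ t := hwt.ne
  have hwa' : w ≠ a := hwa.ne
  have hta' : t ≠ a := hta.ne
  have hwb' : w ≠ b := hwb.ne
  have htc' : t ≠ c := htc.ne
  -- the neighbours of w are exactly t, a, b
  have hNw : ∀ x, G.Adj w x → x = t ∨ x = a ∨ x = b := by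
    intro x hx
    have hsub : ({t, a, b} : Finset V) ⊆ G.neighborFinset w := by
      intro y hy
      simp only [Finset.mem_insert, Finset.mem_singleton] at hy
      rw [mem_neighborFinset]
      rcases hy with rfl | rfl | rfl
      · exact hwt
      · exact hwa
      · exact hwb
    have hcard3 : ({t, a, b} : Finset V).card = 3 := by
      rw [Finset.card_insert_of_notMem (by simp [hta', Ne.symm hbt]),
        Finset.card_insert_of_notMem (by simp [Ne.symm hba]), Finset.card_singleton]
    have hdeg : (G.neighborFinset w).card = 3 := hdw
    have heq := Finset.eq_of_subset_of_card_le hsub (by rw [hcard3]; exact hdeg.le)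
    have hx' : x ∈ G.neighborFinset w := (mem_neighborFinset G w x).2 hx
    rw [← heq] at hx'
    simpa using hx'
  -- the neighbours of t are exactly w, a, c
  have hNt : ∀ x, G.Adj t x → x = w ∨ x = a ∨ x = c := by
    intro x hx
    have hsub : ({w, a, c} : Finset V) ⊆ G.neighborFinset t := by
      intro y hy
      simp only [Finset.mem_insert, Finset.mem_singleton] at hy
      rw [mem_neighborFinset]
      rcases hy with rfl | rfl | rfl
      · exact hwt.symm
      · exact hta
      · exact htc
    have hcard3 : ({w, a, c} : Finset V).card = 3 := by
      rw [Finset.card_insert_of_notMem (by simp [hwa', Ne.symm hcw]),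
        Finset.card_insert_of_notMem (by simp [Ne.symm hca]), Finset.card_singleton]
    have hdeg : (G.neighborFinset t).card = 3 := hdt
    have heq := Finset.eq_of_subset_of_card_le hsub (by rw [hcard3]; exact hdeg.le)
    have hx' : x ∈ G.neighborFinset t := (mem_neighborFinset G t x).2 hx
    rw [← heq] at hx'
    simpa using hx'
  -- a 3-colouring of G minus the edge wt
  obtain ⟨C⟩ := hcrit.2 s(w, t) ((mem_edgeSet G).2 hwt)
  have hprop : ∀ u v, G.Adj u v → ¬(u = w ∧ v = t) → ¬(u = t ∧ v = w) → C u ≠ C v := by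
    intro u v huv h1 h2
    apply C.valid
    rw [deleteEdges_adj]
    refine ⟨huv, ?_⟩
    simp only [Set.mem_singleton_iff, Sym2.eq_iff]
    tauto
  -- the key fact: C a ≠ C b and C c = C b
  have key : C a ≠ C b ∧ C c = C b := by
    by_contra hkey
    obtain ⟨xw, xt, h1, h2, h3, h4, h5⟩ := fin3_ex (C a) (C b) (C c) hkey
    apply hcrit.1
    refine ⟨Coloring.mk (fun v => if v = w then xw else if v = t then xt else C v) ?_⟩
    intro u v huv
    show (if u = w then xw else if u = t then xt else C u)
      ≠ (if v = w then xw else if v = t then xt else C v)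
    by_cases hu1 : u = w
    · subst hu1
      rw [if_pos rfl]
      rcases hNw v huv with rfl | rfl | rfl
      · rw [if_neg (Ne.symm hwt'), if_pos rfl]; exact h5
      · rw [if_neg (Ne.symm hwa'), if_neg (Ne.symm hta')]; exact h1
      · rw [if_neg (Ne.symm hwb'), if_neg hbt]; exact h2
    · by_cases hu2 : u = t
      · subst hu2
        rw [if_neg hu1, if_pos rfl]
        rcases hNt v huv with rfl | rfl | rfl
        · rw [if_pos rfl]; exact h5.symm
        · rw [if_neg (Ne.symm hwa'), if_neg (Ne.symm hta')]; exact h3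
        · rw [if_neg hcw, if_neg (fun h => htc' h.symm)]; exact h4
      · rw [if_neg hu1, if_neg hu2]
        by_cases hv1 : v = w
        · subst hv1
          rw [if_pos rfl]
          rcases hNw u huv.symm with rfl | rfl | rfl
          · exact absurd rfl hu2
          · exact h1.symm
          · exact h2.symm
        · by_cases hv2 : v = t
          · subst hv2
            rw [if_neg hv1, if_pos rfl]
            rcases hNt u huv.symm with rfl | rfl | rfl
            · exact absurd rfl hu1
            · exact h3.symm
            · exact h4.symm
          · rw [if_neg hv1, if_neg hv2]
            exact hprop u v huv (fun h => hu1 h.1) (fun h => hu2 h.1)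
  obtain ⟨kab, kcb⟩ := key
  have kca : C c ≠ C a := by rw [kcb]; exact kab.symm
  -- build a (7,2)-colouring of G, contradiction
  apply hno
  set ψ : V → ZMod 7 := fun v =>
    if v = w then 3 else if v = t then 1 else if v = a then 6 else if v = b then 5
      else if C v = C a then 0 else if C v = C b then 4 else 2 with hψ
  have eqw : ψ w = 3 := by simp only [hψ]; simp
  have eqt : ψ t = 1 := by simp only [hψ]; simp [Ne.symm hwt']
  have eqa : ψ a = 6 := by simp only [hψ]; simp [Ne.symm hwa', Ne.symm hta']
  have eqb : ψ b = 5 := by simp only [hψ]; simp [Ne.symm hwb', hbt, hba]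
  have eqgen : ∀ v, v ≠ w → v ≠ t → v ≠ a → v ≠ b →
      ψ v = (if C v = C a then 0 else if C v = C b then 4 else 2) := by
    intro v h1 h2 h3 h4
    simp only [hψ]
    simp [h1, h2, h3, h4]
  have eqc : ψ c = 5 ∨ ψ c = 4 := by
    by_cases hcb : c = b
    · left; rw [hcb, eqb]
    · right
      rw [eqgen c hcw (fun h => htc' h.symm) hca hcb, if_neg kca, if_pos kcb]
  have main : ∀ u v, G.Adj u v → u ≠ w → u ≠ t → v ≠ w → v ≠ t →
      (circClique 7 2).Adj (ψ u) (ψ v) := by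
    intro u v huv hu1 hu2 hv1 hv2
    have hCuv : C u ≠ C v := hprop u v huv (fun h => hu1 h.1) (fun h => hu2 h.1)
    by_cases hua : u = a
    · subst hua
      by_cases hvb : v = b
      · exact absurd (hvb ▸ huv) hab
      · rw [eqa, eqgen v hv1 hv2 (Ne.symm huv.ne) hvb, if_neg (fun h => hCuv h.symm)]
        by_cases h4 : C v = C b
        · rw [if_pos h4]; exact circ7_adj 6 4 (by decide)
        · rw [if_neg h4]; exact circ7_adj 6 2 (by decide)
    · by_cases hub : u = b
      · subst hub
        by_cases hva : v = a
        · subst hva; exact absurd huv.symm hab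
        · rw [eqb, eqgen v hv1 hv2 hva (Ne.symm huv.ne)]
          by_cases h4 : C v = C a
          · rw [if_pos h4]; exact circ7_adj 5 0 (by decide)
          · rw [if_neg h4, if_neg (fun h => hCuv h.symm)]
            exact circ7_adj 5 2 (by decide)
      · by_cases hva : v = a
        · subst hva
          rw [eqgen u hu1 hu2 hua hub, eqa, if_neg hCuv]
          by_cases h4 : C u = C b
          · rw [if_pos h4]; exact circ7_adj 4 6 (by decide)
          · rw [if_neg h4]; exact circ7_adj 2 6 (by decide)
        · by_cases hvb : v = b
          · subst hvb
            rw [eqgen u hu1 hu2 hua hub, eqb]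
            by_cases h4 : C u = C a
            · rw [if_pos h4]; exact circ7_adj 0 5 (by decide)
            · rw [if_neg h4, if_neg hCuv]; exact circ7_adj 2 5 (by decide)
          · rw [eqgen u hu1 hu2 hua hub, eqgen v hv1 hv2 hva hvb]
            by_cases gua : C u = C a
            · rw [if_pos gua, if_neg (fun h : C v = C a => hCuv (gua.trans h.symm))]
              by_cases gvb : C v = C b
              · rw [if_pos gvb]; exact circ7_adj 0 4 (by decide)
              · rw [if_neg gvb]; exact circ7_adj 0 2 (by decide)
            · by_cases gub : C u = C b
              · rw [if_neg gua, if_pos gub,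
                  if_neg (fun h : C v = C b => hCuv (gub.trans h.symm))]
                by_cases gva : C v = C a
                · rw [if_pos gva]; exact circ7_adj 4 0 (by decide)
                · rw [if_neg gva]; exact circ7_adj 4 2 (by decide)
              · rw [if_neg gua, if_neg gub]
                by_cases gva : C v = C a
                · rw [if_pos gva]; exact circ7_adj 2 0 (by decide)
                · by_cases gvb : C v = C b
                  · rw [if_neg gva, if_pos gvb]; exact circ7_adj 2 4 (by decide)
                  · exact absurd (fin3_third (C a) (C b) (C u) (C v) kab gua gub gva gvb)
                      hCuv
  refine ⟨⟨ψ, ?_⟩⟩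
  intro u v huv
  show (circClique 7 2).Adj (ψ u) (ψ v)
  by_cases hu1 : u = w
  · subst hu1
    rcases hNw v huv with rfl | rfl | rfl
    · rw [eqw, eqt]; exact circ7_adj 3 1 (by decide)
    · rw [eqw, eqa]; exact circ7_adj 3 6 (by decide)
    · rw [eqw, eqb]; exact circ7_adj 3 5 (by decide)
  · by_cases hu2 : u = t
    · subst hu2
      rcases hNt v huv with rfl | rfl | rfl
      · rw [eqt, eqw]; exact circ7_adj 1 3 (by decide)
      · rw [eqt, eqa]; exact circ7_adj 1 6 (by decide)
      · rcases eqc with h | h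
        · rw [eqt, h]; exact circ7_adj 1 5 (by decide)
        · rw [eqt, h]; exact circ7_adj 1 4 (by decide)
    · by_cases hv1 : v = w
      · subst hv1
        rcases hNw u huv.symm with rfl | rfl | rfl
        · exact absurd rfl hu2
        · rw [eqa, eqw]; exact circ7_adj 6 3 (by decide)
        · rw [eqb, eqw]; exact circ7_adj 5 3 (by decide)
      · by_cases hv2 : v = t
        · subst hv2
          rcases hNt u huv.symm with rfl | rfl | rfl
          · exact absurd rfl hu1
          · rw [eqa, eqt]; exact circ7_adj 6 1 (by decide)
          · rcases eqc with h | h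
            · rw [h, eqt]; exact circ7_adj 5 1 (by decide)
            · rw [h, eqt]; exact circ7_adj 4 1 (by decide)
        · exact main u v huv hu1 hu2 hv1 hv2

/-- If `w,t` are adjacent degree-3 vertices with common neighbour `a` in a 4-critical
graph with no (7,2)-colouring, and `b`, `c` are the remaining neighbours of `w`, `t`
respectively, then `ab` and `ac` are edges. -/
theorem stmt_17 {V : Type*} [Fintype V] (G : SimpleGraph V) [DecidableRel G.Adj]
    (hcrit : FourCritical G) (hno : ¬ HasCircColoring G 7 2)
    (w t a b c : V)
    (hdw : G.degree w = 3) (hdt : G.degree t = 3)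
    (hwt : G.Adj w t) (hwa : G.Adj w a) (hta : G.Adj t a)
    (hwb : G.Adj w b) (hba : b ≠ a) (hbt : b ≠ t)
    (htc : G.Adj t c) (hca : c ≠ a) (hcw : c ≠ w) :
    G.Adj a b ∧ G.Adj a c :=
  ⟨adjAB G hcrit hno w t a b c hdw hdt hwt hwa hta hwb hba hbt htc hca hcw,
   adjAB G hcrit hno t w a c b hdt hdw hwt.symm hta hwa htc hca hcw hwb hba hbt⟩
end
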